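/- Let (X, Σ, μ) be a probability space, C a finite nonempty set, and f* : X → C a measurable map with μ(f*⁻¹{g}) > 0 for every g ∈ C. For a measurable f : X → Δ_C, define the concept remapping distribution α_f : C → Δ_C by α_f(g)(c) = μ(f*⁻¹{g})⁻¹ · ∫_{f*⁻¹{g}} f(x)(c) dμ(x). Then α_f(g) is a point mass for every g ∈ C if and only if there exists a map a : C → C such that f(x) = δ_{a(f*(x))} for μ-almost every x ∈ X; and in that case α_f(g) = δ_{a(g)} for all g ∈ C. In particular, deterministic concept remapping distributions are in one-to-one correspondence (up to μ-null sets) with concept extractors of the form δ∘a∘f*. -/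

import Mathlib

open MeasureTheory
open scoped ENNReal

/-- The concept remapping distribution `α_f : C → Δ_C` induced by a concept
extractor `f : X → Δ_C`: `α_f g c` is the conditional expectation of `f x c`
given that the ground-truth concept `f* x` equals `g`. -/
noncomputable def remapDistr {X C : Type*} [MeasurableSpace X]
    (μ : Measure X) (fstar : X → C) (f : X → C → ℝ≥0∞) : C → C → ℝ≥0∞ :=
  fun g c => (μ (fstar ⁻¹' {g}))⁻¹ * ∫⁻ x in fstar ⁻¹' {g}, f x c ∂μ

/-- **Deterministic concept remappings correspond to deterministic concept
extractors.** Let `(X, μ)` be a probability space, `C` finite nonempty, and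
`f* : X → C` a measurable ground-truth concept extractor with every fiber of
positive measure. For a measurable `f : X → Δ_C`, the remapping `α_f g` is a
point mass for every `g` iff there is a map `a : C → C` with
`f x = δ_{a (f* x)}` for μ-a.e. `x`; and in that case `α_f g = δ_{a g}` for
all `g`. -/
theorem remapDistr_deterministic_iff
    {X : Type*} [MeasurableSpace X] (μ : Measure X) [IsProbabilityMeasure μ]
    {C : Type*} [Fintype C] [Nonempty C] [DecidableEq C]
    [MeasurableSpace C] [MeasurableSingletonClass C]
    (fstar : X → C) (hfstar : Measurable fstar)
    (hpos : ∀ g : C, 0 < μ (fstar ⁻¹' {g}))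
    (f : X → C → ℝ≥0∞) (hfm : ∀ c, Measurable fun x => f x c)
    (hf1 : ∀ x, ∑ c, f x c = 1) :
    ((∀ g : C, ∃ c : C, remapDistr μ fstar f g = fun c' => if c' = c then 1 else 0) ↔
      (∃ a : C → C, ∀ᵐ x ∂μ, f x = fun c => if c = a (fstar x) then 1 else 0)) ∧
    (∀ a : C → C, (∀ᵐ x ∂μ, f x = fun c => if c = a (fstar x) then 1 else 0) →
      ∀ g : C, remapDistr μ fstar f g = fun c' => if c' = a g then 1 else 0) := by

  have hA : ∀ g : C, MeasurableSet (fstar ⁻¹' {g}) :=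
    fun g => hfstar (measurableSet_singleton g)
  have hle : ∀ x c, f x c ≤ 1 := by
    intro x c
    calc f x c ≤ ∑ c', f x c' :=
          Finset.single_le_sum (fun _ _ => zero_le) (Finset.mem_univ c)
      _ = 1 := hf1 x
  have hne0 : ∀ g, μ (fstar ⁻¹' {g}) ≠ 0 := fun g => (hpos g).ne'
  have hnetop : ∀ g, μ (fstar ⁻¹' {g}) ≠ ∞ := fun g => measure_ne_top μ _
  have back : ∀ a : C → C, (∀ᵐ x ∂μ, f x = fun c => if c = a (fstar x) then 1 else 0) →
      ∀ g : C, remapDistr μ fstar f g = fun c' => if c' = a g then 1 else 0 := by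
    intro a hae g
    funext c
    have h1 : ∫⁻ x in fstar ⁻¹' {g}, f x c ∂μ
        = ∫⁻ x in fstar ⁻¹' {g}, (if c = a g then (1 : ℝ≥0∞) else 0) ∂μ := by
      refine lintegral_congr_ae ?_
      filter_upwards [ae_restrict_of_ae hae, ae_restrict_mem (hA g)] with x hx hxg
      have hg : fstar x = g := hxg
      rw [hx]
      simp [hg]
    rw [remapDistr, h1, setLIntegral_const]
    by_cases hc : c = a g <;>
      simp [hc, ENNReal.inv_mul_cancel (hne0 g) (hnetop g)]
  refine ⟨⟨?_, fun ⟨a, hae⟩ g => ⟨a g, back a hae g⟩⟩, back⟩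
  intro h
  choose a ha using h
  refine ⟨a, ?_⟩
  have key : ∀ g : C, ∀ᵐ x ∂μ.restrict (fstar ⁻¹' {g}),
      f x = fun c => if c = a g then 1 else 0 := by
    intro g
    set A := fstar ⁻¹' {g} with hAdef
    have hInt : ∫⁻ x in A, f x (a g) ∂μ = μ A := by
      have h0 := congrFun (ha g) (a g)
      simp only [remapDistr, if_pos rfl] at h0
      have h2 := congrArg (fun t => μ A * t) h0
      simpa [hAdef, ← mul_assoc, ENNReal.mul_inv_cancel (hne0 g) (hnetop g)] using h2
    have hfin : ∫⁻ x in A, f x (a g) ∂μ ≠ ∞ := by rw [hInt]; exact hnetop g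
    have hsub : ∫⁻ x in A, (1 - f x (a g)) ∂μ = 0 := by
      rw [lintegral_sub (hfm (a g)) hfin (Filter.Eventually.of_forall fun x => hle x (a g))]
      rw [hInt, setLIntegral_one, tsub_self]
    have hzero := (lintegral_eq_zero_iff (μ := μ.restrict A)
      (measurable_const.sub (hfm (a g)))).mp hsub
    filter_upwards [hzero] with x hx
    simp only [Pi.zero_apply] at hx
    have hone : f x (a g) = 1 :=
      le_antisymm (hle x (a g)) (tsub_eq_zero_iff_le.mp hx)
    have hrest : ∑ c' ∈ Finset.univ.erase (a g), f x c' = 0 := by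
      have hsum := hf1 x
      rw [← Finset.add_sum_erase _ _ (Finset.mem_univ (a g)), hone] at hsum
      have : (1 : ℝ≥0∞) + ∑ c' ∈ Finset.univ.erase (a g), f x c' = 1 + 0 := by
        simpa using hsum
      exact (ENNReal.add_right_inj ENNReal.one_ne_top).mp this
    funext c
    by_cases hc : c = a g
    · simp [hc, hone]
    · have : f x c = 0 := by
        have := (Finset.sum_eq_zero_iff.mp hrest) c (Finset.mem_erase.mpr ⟨hc, Finset.mem_univ c⟩)
        exact this
      simp [hc, this]
  rw [ae_iff]
  have hsubset : {x | ¬ f x = fun c => if c = a (fstar x) then 1 else 0}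
      ⊆ ⋃ g, ({x | ¬ f x = fun c => if c = a g then 1 else 0} ∩ fstar ⁻¹' {g}) := by
    intro x hx
    exact Set.mem_iUnion.2 ⟨fstar x, ⟨hx, rfl⟩⟩
  refine measure_mono_null hsubset (measure_iUnion_null fun g => ?_)
  rw [← Measure.restrict_apply' (hA g)]
  exact ae_iff.mp (key g)
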